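/- Let (p_n) be a sequence in (0,1] with p_n → 0. For each n let J_n be a partition of {1,...,n} such that every block of J_n has size at most n·p_n. Then the n-th root of (∏_{J ∈ J_n} |J|!)/n! converges to 0 as n → ∞. -/
import Mathlib

/-- if `p n → 0` with `p n ∈ (0,1]` and every block of the
partition `𝒥 n` of `{1,…,n}` has size at most `n · p n`, then
`((∏_{J ∈ 𝒥 n} |J|!)/n!)^{1/n} → 0`. -/
theorem stmt4 (p : ℕ → ℝ) (hp : ∀ n, p n ∈ Set.Ioc (0 : ℝ) 1)
    (hp0 : Filter.Tendsto p Filter.atTop (nhds 0))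
    (𝒥 : (n : ℕ) → Finpartition (Finset.univ : Finset (Fin n)))
    (hsize : ∀ n, ∀ J ∈ (𝒥 n).parts, (J.card : ℝ) ≤ n * p n) :
    Filter.Tendsto
      (fun n : ℕ =>
        (((∏ J ∈ (𝒥 n).parts, Nat.factorial J.card : ℕ) : ℝ) / Nat.factorial n)
          ^ ((1 : ℝ) / n))
      Filter.atTop (nhds 0) := by
  have hE : Filter.Tendsto (fun n => Real.exp 1 * p n) Filter.atTop (nhds 0) := by
    simpa using hp0.const_mul (Real.exp 1)
  apply squeeze_zero' (Filter.Eventually.of_forall fun n =>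
    Real.rpow_nonneg (by positivity) _) ?_ hE
  filter_upwards [Filter.eventually_ge_atTop 1] with n hn
  have hn0 : (n : ℝ) ≠ 0 := by positivity
  have hp' := hp n
  have hpn : 0 < p n := hp'.1
  -- numerator bound : ∏ |J|! ≤ (n * p n)^n
  have hnum : ((∏ J ∈ (𝒥 n).parts, Nat.factorial J.card : ℕ) : ℝ)
      ≤ ((n : ℝ) * p n) ^ n := by
    push_cast
    calc ∏ J ∈ (𝒥 n).parts, ((Nat.factorial J.card : ℝ))
        ≤ ∏ J ∈ (𝒥 n).parts, ((n : ℝ) * p n) ^ J.card := by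
          apply Finset.prod_le_prod (fun J _ => by positivity)
          intro J hJ
          calc ((Nat.factorial J.card : ℝ)) ≤ (J.card : ℝ) ^ J.card := by
                exact_mod_cast Nat.factorial_le_pow J.card
            _ ≤ ((n : ℝ) * p n) ^ J.card :=
                pow_le_pow_left₀ (by positivity) (hsize n J hJ) _
      _ = ((n : ℝ) * p n) ^ (∑ J ∈ (𝒥 n).parts, J.card) := by
          rw [Finset.prod_pow_eq_pow_sum]
      _ = ((n : ℝ) * p n) ^ n := by
          rw [(𝒥 n).sum_card_parts, Finset.card_univ, Fintype.card_fin]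
  -- denominator bound : n^n ≤ exp 1 ^ n * n!
  have hfac : ((n : ℝ)) ^ n ≤ Real.exp 1 ^ n * Nat.factorial n := by
    have h := Real.pow_div_factorial_le_exp (x := (n : ℝ)) (by positivity) n
    rw [div_le_iff₀ (by positivity)] at h
    calc ((n : ℝ)) ^ n ≤ Real.exp n * Nat.factorial n := h
      _ = Real.exp 1 ^ n * Nat.factorial n := by rw [Real.exp_one_pow]
  have hkey : ((∏ J ∈ (𝒥 n).parts, Nat.factorial J.card : ℕ) : ℝ) / Nat.factorial n
      ≤ (Real.exp 1 * p n) ^ n := by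
    rw [div_le_iff₀ (by positivity : (0:ℝ) < (Nat.factorial n : ℝ))]
    calc ((∏ J ∈ (𝒥 n).parts, Nat.factorial J.card : ℕ) : ℝ)
        ≤ ((n : ℝ) * p n) ^ n := hnum
      _ = (n : ℝ) ^ n * p n ^ n := mul_pow _ _ _
      _ ≤ (Real.exp 1 ^ n * Nat.factorial n) * p n ^ n := by
          apply mul_le_mul_of_nonneg_right hfac (by positivity)
      _ = (Real.exp 1 * p n) ^ n * Nat.factorial n := by ring
  calc (((∏ J ∈ (𝒥 n).parts, Nat.factorial J.card : ℕ) : ℝ) / Nat.factorial n)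
        ^ ((1 : ℝ) / n)
      ≤ ((Real.exp 1 * p n) ^ n) ^ ((1 : ℝ) / n) :=
        Real.rpow_le_rpow (by positivity) hkey (by positivity)
    _ = Real.exp 1 * p n := by
        rw [← Real.rpow_natCast (Real.exp 1 * p n) n, ← Real.rpow_mul (by positivity),
          mul_one_div, div_self hn0, Real.rpow_one]
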